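/- arXiv:2409.06006 — 5 statements merged into one kernel-verified Lean document; each statement's English description precedes it below -/
import Mathlib

section
/- Let N_0, ..., N_m be positive integers with m ≥ 1. Suppose that for every choice of integers a_0, ..., a_m with 0 ≤ a_j ≤ N_j and not all a_j equal to 0 and not all a_j equal to N_j, the quantity ζ(a) := Σ_{j=1}^m (a_{j-1}(N_j - a_j) + a_j(N_{j-1} - a_{j-1})) - 2·Σ_{j=0}^m a_j(N_j - a_j) is strictly positive. Then N_j = 1 for all j. -/
/-- The quantity `ζ(a) = Σ_{j=1}^m (a_{j-1}(N_j - a_j) + a_j(N_{j-1} - a_{j-1}))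
- 2·Σ_{j=0}^m a_j(N_j - a_j)` from the A-type analysis. -/
def zetaA (m : ℕ) (a N : ℕ → ℤ) : ℤ :=
  (∑ j ∈ Finset.Icc 1 m, (a (j - 1) * (N j - a j) + a j * (N (j - 1) - a (j - 1))))
    - 2 * ∑ j ∈ Finset.range (m + 1), a j * (N j - a j)

lemma zetaA_one (N : ℕ → ℤ) : ∀ m, 1 ≤ m → zetaA m (fun _ => 1) N = 2 - N 0 - N m := by
  intro m
  induction m with
  | zero => omega
  | succ n ih =>
    intro _
    rcases Nat.eq_zero_or_pos n with h1 | h1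
    · subst h1
      simp [zetaA, Finset.Icc_self, Finset.sum_range_succ]
      ring
    · have hn : 1 ≤ n := h1
      have hicc : Finset.Icc 1 (n + 1) = insert (n + 1) (Finset.Icc 1 n) :=
        (Finset.insert_Icc_right_eq_Icc_add_one (by omega)).symm
      have hr : Finset.range (n + 2) = insert (n + 1) (Finset.range (n + 1)) :=
        Finset.range_add_one
      have := ih hn
      simp only [zetaA] at this ⊢
      rw [hicc, hr, Finset.sum_insert (by simp), Finset.sum_insert (by simp)]
      simp only [Nat.add_sub_cancel]
      linarith [this]

/-- if `ζ(a) > 0` for every integer choice `0 ≤ a_j ≤ N_j` with the `a_j`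
not all `0` and not all `N_j`, then all `N_j = 1`. -/
theorem stmt_2 (m : ℕ) (hm : 1 ≤ m) (N : ℕ → ℤ) (hN : ∀ j ≤ m, 0 < N j)
    (h : ∀ a : ℕ → ℤ, (∀ j ≤ m, 0 ≤ a j ∧ a j ≤ N j) →
      (¬ ∀ j ≤ m, a j = 0) → (¬ ∀ j ≤ m, a j = N j) → 0 < zetaA m a N) :
    ∀ j ≤ m, N j = 1 := by
  intro j hj
  by_contra hne
  have hj2 : 2 ≤ N j := by have := hN j hj; omega
  have hpos := h (fun _ => 1)
    (fun k hk => ⟨zero_le_one, hN k hk⟩)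
    (by intro hall; simpa using hall 0 (Nat.zero_le m))
    (by intro hall; have := hall j hj; omega)
  rw [zetaA_one N m hm] at hpos
  have h0 := hN 0 (Nat.zero_le m)
  have hmN := hN m le_rfl
  omega
end

section
/- Let N^A_0, ..., N^A_{2m} be nonnegative integers satisfying N^A_j = N^A_{2m-j} for all j, with total sum 2n+1 and middle size N^A_m odd. Let a_0, ..., a_{2m} be integers with 0 ≤ a_j ≤ N^A_j. Then there exists a signed permutation π of {1,...,n,0,-n,...,-1} (fixing 0, with π(i)=j ⇒ π(-i)=-j) and an index 1 ≤ k ≤ n such that a_j counts the elements of the j-th consecutive block (of size N^A_j) of positions mapped by π into {1,...,k}, if and only if some a_j > 0 and a_j + a_{2m-j} ≤ N^A_j for all j. -/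
/-- Prefix sums of the block sizes: `blockStart N j = N_0 + ⋯ + N_{j-1}`, so the
`j`-th consecutive block of positions is `{blockStart N j + 1, …, blockStart N j + N j}`. -/
def blockStart (N : ℕ → ℕ) (j : ℕ) : ℕ := ∑ i ∈ Finset.range j, N i

lemma blockStart_succ (N : ℕ → ℕ) (j : ℕ) :
    blockStart N (j+1) = blockStart N j + N j := Finset.sum_range_succ N j

lemma blockStart_mono (N : ℕ → ℕ) {i j : ℕ} (h : i ≤ j) :
    blockStart N i ≤ blockStart N j :=
  Finset.sum_le_sum_of_subset (Finset.range_subset_range.2 h)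

lemma exists_block (N : ℕ → ℕ) (M t : ℕ) (h1 : 1 ≤ t) (h2 : t ≤ blockStart N (M+1)) :
    ∃ j ≤ M, blockStart N j < t ∧ t ≤ blockStart N j + N j := by
  induction M with
  | zero =>
    refine ⟨0, le_refl 0, ?_, ?_⟩
    · simp [blockStart]; omega
    · simpa [blockStart, Finset.sum_range_one] using h2
  | succ M ih =>
    by_cases h : t ≤ blockStart N (M+1)
    · obtain ⟨j, hj, hh⟩ := ih h
      exact ⟨j, hj.trans (Nat.le_succ M), hh⟩
    · refine ⟨M+1, le_refl _, by omega, ?_⟩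
      rw [← blockStart_succ]; exact h2

lemma blockStart_reflect (N : ℕ → ℕ) (n m : ℕ)
    (hsym : ∀ j ≤ 2*m, N j = N (2*m - j))
    (hsum : (∑ j ∈ Finset.range (2*m+1), N j) = 2*n+1)
    {j : ℕ} (hj : j ≤ 2*m) :
    blockStart N j + N j + blockStart N (2*m - j) = 2*n+1 := by
  have h2 : blockStart N (j+1) + ∑ i ∈ Finset.Ico (j+1) (2*m+1), N i
      = blockStart N (2*m+1) := by
    simp only [blockStart, Finset.range_eq_Ico]
    exact Finset.sum_Ico_consecutive N (by omega) (by omega)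
  have h3 : ∑ i ∈ Finset.Ico (j+1) (2*m+1), N i = blockStart N (2*m - j) := by
    rw [blockStart]
    refine Finset.sum_bij' (fun i _ => 2*m - i) (fun i _ => 2*m - i) ?_ ?_ ?_ ?_ ?_
    · intro i hi
      simp only [Finset.mem_Ico] at hi
      simp only [Finset.mem_range]; omega
    · intro i hi
      simp only [Finset.mem_range] at hi
      simp only [Finset.mem_Ico]; omega
    · intro i hi; simp only [Finset.mem_Ico] at hi; show 2*m - (2*m - i) = i; omega
    · intro i hi; simp only [Finset.mem_range] at hi; show 2*m - (2*m - i) = i; omega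
    · intro i hi
      simp only [Finset.mem_Ico] at hi
      show N i = N (2*m - i)
      exact hsym i (by omega)
  have h4 : blockStart N (2*m+1) = 2*n+1 := hsum
  rw [blockStart_succ] at h2
  omega

lemma key_inj_helper (P x y s t : ℕ) (hx : x ≤ 2) (hy : y ≤ 2)
    (hs1 : 1 ≤ s) (hs2 : s ≤ P) (ht1 : 1 ≤ t) (ht2 : t ≤ P)
    (h : x*(P+1)+s = y*(P+1)+t) : s = t := by
  have hx' : x = 0 ∨ x = 1 ∨ x = 2 := by omega
  have hy' : y = 0 ∨ y = 1 ∨ y = 2 := by omega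
  rcases hx' with h'|h'|h' <;> rcases hy' with h''|h''|h'' <;> subst h' <;> subst h'' <;> omega

lemma key_sym_helper (P x y s t : ℕ) (hx : x ≤ 2) (hy : y ≤ 2)
    (hs1 : 1 ≤ s) (hs2 : s ≤ P) (ht1 : 1 ≤ t) (ht2 : t ≤ P) :
    (x*(P+1)+s ≤ (2-y)*(P+1)+(P+1-t) ↔ y*(P+1)+t ≤ (2-x)*(P+1)+(P+1-s)) := by
  have hx' : x = 0 ∨ x = 1 ∨ x = 2 := by omega
  have hy' : y = 0 ∨ y = 1 ∨ y = 2 := by omega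
  rcases hx' with h'|h'|h' <;> rcases hy' with h''|h''|h'' <;> subst h' <;> subst h'' <;> omega

/-- B-type weight correspondence: the `2n+1` positions
`{1,…,n,0,-n,…,-1}` (encoded in order as `1,…,2n+1`) are partitioned into
consecutive blocks `H^A_0, …, H^A_{2m}` of sizes `N^A_0, …, N^A_{2m}`, symmetric
with total sum `2n+1` and `N^A_m` odd.  Given `0 ≤ a_j ≤ N^A_j`, there exist a
signed permutation `π` (a permutation of positions `1,…,2n+1` with
`π(2n+2-t) = 2n+2-π(t)`, fixing everything outside) and `1 ≤ k ≤ n` such that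
`a_j` is the number of elements of `H^A_j` mapped by `π` into `{1,…,k}`, if and
only if some `a_j > 0` and `a_j + a_{2m-j} ≤ N^A_j` for all `j`. -/
theorem stmt_11 (n m : ℕ) (hn : 1 ≤ n) (N : ℕ → ℕ)
    (hsym : ∀ j ≤ 2 * m, N j = N (2 * m - j))
    (hsum : (∑ j ∈ Finset.range (2 * m + 1), N j) = 2 * n + 1)
    (hodd : Odd (N m))
    (a : ℕ → ℤ) (ha : ∀ j ≤ 2 * m, 0 ≤ a j ∧ a j ≤ (N j : ℤ)) :
    (∃ π : Equiv.Perm ℕ, ∃ k : ℕ, 1 ≤ k ∧ k ≤ n ∧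
        (∀ t : ℕ, ¬(1 ≤ t ∧ t ≤ 2 * n + 1) → π t = t) ∧
        (∀ t : ℕ, 1 ≤ t → t ≤ 2 * n + 1 → π (2 * n + 2 - t) = 2 * n + 2 - π t) ∧
        (∀ j ≤ 2 * m, a j =
          (((Finset.Icc (blockStart N j + 1) (blockStart N j + N j)).filter
            (fun t => π t ≤ k)).card : ℤ)))
      ↔ ((∃ j ≤ 2 * m, 0 < a j) ∧ ∀ j ≤ 2 * m, a j + a (2 * m - j) ≤ (N j : ℤ)) := by
  constructor
  · rintro ⟨π, k, hk1, hkn, hfix, hmir, hcount⟩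
    have hbs_top : blockStart N (2*m+1) = 2*n+1 := hsum
    constructor
    · set t := π.symm 1 with ht
      have hπt : π t = 1 := π.apply_symm_apply 1
      have htr : 1 ≤ t ∧ t ≤ 2*n+1 := by
        by_contra h
        have h2 := hfix t h
        rw [h2] at hπt
        exact h ⟨by omega, by omega⟩
      obtain ⟨j, hj, hb1, hb2⟩ := exists_block N (2*m) t htr.1 (by omega)
      refine ⟨j, hj, ?_⟩
      rw [hcount j hj]
      have hmem : t ∈ (Finset.Icc (blockStart N j + 1) (blockStart N j + N j)).filter
          (fun s => π s ≤ k) := by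
        simp only [Finset.mem_filter, Finset.mem_Icc]
        exact ⟨⟨by omega, hb2⟩, by rw [hπt]; exact hk1⟩
      have hpos := Finset.card_pos.2 ⟨t, hmem⟩
      exact_mod_cast hpos
    · intro j hj
      have hj' : 2*m - j ≤ 2*m := by omega
      rw [hcount j hj, hcount (2*m-j) hj']
      set F1 := (Finset.Icc (blockStart N j + 1) (blockStart N j + N j)).filter
        (fun t => π t ≤ k) with hF1
      set F2 := (Finset.Icc (blockStart N (2*m-j) + 1) (blockStart N (2*m-j) + N (2*m-j))).filter
        (fun t => π t ≤ k) with hF2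
      have hrefl := blockStart_reflect N n m hsym hsum hj
      have hNj : N (2*m - j) = N j := (hsym j hj).symm
      have hblk2 : blockStart N (2*m-j) + N (2*m-j) ≤ 2*n+1 := by
        rw [← blockStart_succ]
        calc blockStart N (2*m-j+1) ≤ blockStart N (2*m+1) := blockStart_mono N (by omega)
          _ = 2*n+1 := hbs_top
      have himg : ∀ t ∈ F2, (2*n+2-t) ∈ Finset.Icc (blockStart N j + 1) (blockStart N j + N j)
          ∧ ¬ π (2*n+2-t) ≤ k := by
        intro t htF
        simp only [hF2, Finset.mem_filter, Finset.mem_Icc] at htF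
        obtain ⟨⟨h1, h2⟩, h3⟩ := htF
        have htr1 : 1 ≤ t := by omega
        have htr2 : t ≤ 2*n+1 := by omega
        have hm := hmir t htr1 htr2
        refine ⟨by simp only [Finset.mem_Icc]; omega, ?_⟩
        rw [hm]
        omega
      have hinj : Set.InjOn (fun t => 2*n+2-t) ↑F2 := by
        intro x hx y hy hxy
        have hx' := Finset.mem_Icc.1 (Finset.mem_filter.1 (Finset.mem_coe.1 hx)).1
        have hy' := Finset.mem_Icc.1 (Finset.mem_filter.1 (Finset.mem_coe.1 hy)).1
        have hxy' : 2*n+2-x = 2*n+2-y := hxy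
        omega
      have hcard2 : (F2.image (fun t => 2*n+2-t)).card = F2.card :=
        Finset.card_image_of_injOn hinj
      have hsub : F1 ∪ F2.image (fun t => 2*n+2-t)
          ⊆ Finset.Icc (blockStart N j + 1) (blockStart N j + N j) := by
        intro u hu
        rcases Finset.mem_union.1 hu with hu | hu
        · exact Finset.filter_subset _ _ hu
        · obtain ⟨t, htF, rfl⟩ := Finset.mem_image.1 hu
          exact (himg t htF).1
      have hdisj : Disjoint F1 (F2.image (fun t => 2*n+2-t)) := by
        rw [Finset.disjoint_left]
        intro u hu1 hu2
        obtain ⟨t, htF, rfl⟩ := Finset.mem_image.1 hu2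
        have := (himg t htF).2
        exact this (Finset.mem_filter.1 hu1).2
      have hfin : F1.card + F2.card ≤ N j := by
        calc F1.card + F2.card = (F1 ∪ F2.image (fun t => 2*n+2-t)).card := by
              rw [Finset.card_union_of_disjoint hdisj, hcard2]
          _ ≤ (Finset.Icc (blockStart N j + 1) (blockStart N j + N j)).card :=
              Finset.card_le_card hsub
          _ = N j := by rw [Nat.card_Icc]; omega
      exact_mod_cast hfin
  · rintro ⟨⟨j0, hj0, hj0pos⟩, hle⟩
    classical
    set b : ℕ → ℕ := fun j => (a j).toNat with hbdef
    have hba : ∀ j ≤ 2*m, (b j : ℤ) = a j := fun j hj => Int.toNat_of_nonneg (ha j hj).1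
    have hbN : ∀ j ≤ 2*m, b j ≤ N j := by
      intro j hj
      have h1 := (ha j hj).2
      have h2 := hba j hj
      exact_mod_cast h2 ▸ h1
    have hbsum : ∀ j ≤ 2*m, b j + b (2*m-j) ≤ N j := by
      intro j hj
      have h1 := hba j hj
      have h2 := hba (2*m-j) (by omega)
      have h3 := hle j hj
      have : (b j : ℤ) + (b (2*m-j) : ℤ) ≤ (N j : ℤ) := by rw [h1, h2]; exact h3
      exact_mod_cast this
    set k := ∑ j ∈ Finset.range (2*m+1), b j with hkdef
    have hbs_top : blockStart N (2*m+1) = 2*n+1 := hsum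
    have hblock_sub : ∀ j ≤ 2*m, blockStart N j + N j ≤ 2*n+1 := by
      intro j hj
      rw [← blockStart_succ]
      calc blockStart N (j+1) ≤ blockStart N (2*m+1) := blockStart_mono N (by omega)
        _ = 2*n+1 := hbs_top
    have block_unique : ∀ i ≤ 2*m, ∀ j ≤ 2*m, ∀ t : ℕ, blockStart N i < t →
        t ≤ blockStart N i + N i → blockStart N j < t → t ≤ blockStart N j + N j → i = j := by
      intro i hi j hj t h1 h2 h3 h4
      rcases lt_trichotomy i j with h | h | h
      · have : blockStart N i + N i ≤ blockStart N j := by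
          rw [← blockStart_succ]; exact blockStart_mono N (by omega)
        omega
      · exact h
      · have : blockStart N j + N j ≤ blockStart N i := by
          rw [← blockStart_succ]; exact blockStart_mono N (by omega)
        omega
    set S := (Finset.range (2*m+1)).biUnion
      (fun j => Finset.Icc (blockStart N j + 1) (blockStart N j + b j)) with hSdef
    have hSmem : ∀ t, t ∈ S ↔ ∃ j ≤ 2*m, blockStart N j + 1 ≤ t ∧ t ≤ blockStart N j + b j := by
      intro t
      simp only [hSdef, Finset.mem_biUnion, Finset.mem_range, Finset.mem_Icc, Nat.lt_succ_iff]
    have hSsub : ∀ t ∈ S, 1 ≤ t ∧ t ≤ 2*n+1 := by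
      intro t ht
      obtain ⟨j, hj, h1, h2⟩ := (hSmem t).1 ht
      have := hbN j hj
      have := hblock_sub j hj
      omega
    have hScard : S.card = k := by
      rw [hSdef, Finset.card_biUnion, hkdef]
      · refine Finset.sum_congr rfl ?_
        intro j hj
        rw [Nat.card_Icc]; omega
      · intro i hi j hj hij
        simp only [Finset.mem_coe, Finset.mem_range, Nat.lt_succ_iff] at hi hj
        rw [Function.onFun, Finset.disjoint_left]
        intro t hti htj
        simp only [Finset.mem_Icc] at hti htj
        have hbi := hbN i hi
        have hbj := hbN j hj
        exact hij (block_unique i hi j hj t (by omega) (by omega) (by omega) (by omega))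
    have hk1 : 1 ≤ k := by
      have hb0 : 1 ≤ b j0 := by
        have := hba j0 hj0
        omega
      calc 1 ≤ b j0 := hb0
        _ ≤ k := Finset.single_le_sum (fun i _ => Nat.zero_le _)
            (Finset.mem_range.2 (by omega))
    have hkn : k ≤ n := by
      have hrefl : ∑ j ∈ Finset.range (2*m+1), b (2*m - j) = k := by
        rw [hkdef]
        have := Finset.sum_range_reflect b (2*m+1)
        simpa using this
      have h2k : 2*k = ∑ j ∈ Finset.range (2*m+1), (b j + b (2*m-j)) := by
        rw [Finset.sum_add_distrib, hrefl]; omega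
      have hle2 : ∑ j ∈ Finset.range (2*m+1), (b j + b (2*m-j))
          ≤ ∑ j ∈ Finset.range (2*m+1), N j := by
        refine Finset.sum_le_sum ?_
        intro i hi
        exact hbsum i (by simp only [Finset.mem_range] at hi; omega)
      omega
    have hmirS : ∀ t ∈ S, (2*n+2-t) ∉ S := by
      intro t ht hmt
      obtain ⟨j, hj, h1, h2⟩ := (hSmem t).1 ht
      obtain ⟨j', hj', h3, h4⟩ := (hSmem _).1 hmt
      have hrefl := blockStart_reflect N n m hsym hsum hj
      have hNj : N (2*m - j) = N j := (hsym j hj).symm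
      have hbj := hbN j hj
      have hbj' := hbN j' hj'
      have heq : j' = 2*m - j :=
        block_unique j' hj' (2*m-j) (by omega) (2*n+2-t) (by omega) (by omega)
          (by omega) (by omega)
      subst heq
      have := hbsum j hj
      omega
    set g : ℕ → ℕ := fun t => if t ∈ S then 0 else if 2*n+2-t ∈ S then 2 else 1 with hgdef
    have hg2 : ∀ t, g t ≤ 2 := by
      intro t; simp only [hgdef]; split_ifs <;> omega
    have hg0 : ∀ t, (g t = 0 ↔ t ∈ S) := by
      intro t; simp only [hgdef]; split_ifs with h1 h2 <;> simp [h1]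
    have hgM : ∀ t, 1 ≤ t → t ≤ 2*n+1 → g (2*n+2-t) = 2 - g t := by
      intro t h1 h2
      have hMM : 2*n+2-(2*n+2-t) = t := by omega
      by_cases hts : t ∈ S
      · have hnm := hmirS t hts
        simp only [hgdef, hnm, hMM, hts, if_false, if_true]
      · by_cases htm : 2*n+2-t ∈ S
        · simp only [hgdef, htm, hts, if_true, if_false]
        · simp only [hgdef, htm, hts, hMM, if_false]
    set key : ℕ → ℕ := fun t => g t * (2*n+2) + t with hkeydef
    set A := Finset.Icc 1 (2*n+1) with hAdef
    have hAcard : A.card = 2*n+1 := by rw [hAdef, Nat.card_Icc]; omega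
    have hAmem : ∀ t, t ∈ A ↔ (1 ≤ t ∧ t ≤ 2*n+1) := by
      intro t; rw [hAdef, Finset.mem_Icc]
    have hkeyinj : ∀ s ∈ A, ∀ t ∈ A, key s = key t → s = t := by
      intro s hs t ht h
      rw [hAmem] at hs ht
      exact key_inj_helper (2*n+1) (g s) (g t) s t (hg2 s) (hg2 t)
        hs.1 hs.2 ht.1 ht.2 (by simpa [hkeydef] using h)
    have hkeyM : ∀ t ∈ A, key (2*n+2-t) = (2 - g t) * (2*n+2) + (2*n+2-t) := by
      intro t ht
      rw [hAmem] at ht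
      simp only [hkeydef]
      rw [hgM t ht.1 ht.2]
    have hkeysym : ∀ s ∈ A, ∀ t ∈ A, (key s ≤ key (2*n+2-t) ↔ key t ≤ key (2*n+2-s)) := by
      intro s hs t ht
      rw [hkeyM s hs, hkeyM t ht]
      have hs' := (hAmem s).1 hs
      have ht' := (hAmem t).1 ht
      have := key_sym_helper (2*n+1) (g s) (g t) s t (hg2 s) (hg2 t)
        hs'.1 hs'.2 ht'.1 ht'.2
      simpa [hkeydef] using this
    set r : ℕ → ℕ := fun t => (A.filter (fun s => key s ≤ key t)).card with hrdef
    have hr1 : ∀ t ∈ A, 1 ≤ r t := by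
      intro t ht
      have : t ∈ A.filter (fun s => key s ≤ key t) := Finset.mem_filter.2 ⟨ht, le_refl _⟩
      have := Finset.card_pos.2 ⟨t, this⟩
      simpa [hrdef] using this
    have hr2 : ∀ t, r t ≤ 2*n+1 := by
      intro t
      calc r t ≤ A.card := Finset.card_le_card (Finset.filter_subset _ _)
        _ = 2*n+1 := hAcard
    have hrmono : ∀ s ∈ A, ∀ t ∈ A, key s < key t → r s < r t := by
      intro s hs t ht h
      apply Finset.card_lt_card
      rw [Finset.ssubset_iff_of_subset
        (Finset.monotone_filter_right A (fun u _ hu => le_trans hu h.le))]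
      exact ⟨t, Finset.mem_filter.2 ⟨ht, le_refl _⟩, by
        simp only [Finset.mem_filter]
        rintro ⟨-, hle⟩
        omega⟩
    have hrinj : ∀ s ∈ A, ∀ t ∈ A, r s = r t → s = t := by
      intro s hs t ht h
      rcases lt_trichotomy (key s) (key t) with hlt | heq | hlt
      · have := hrmono s hs t ht hlt; omega
      · exact hkeyinj s hs t ht heq
      · have := hrmono t ht s hs hlt; omega
    have hrk : ∀ t ∈ A, (r t ≤ k ↔ t ∈ S) := by
      intro t ht
      constructor
      · intro h
        by_contra hts
        have hsub : insert t S ⊆ A.filter (fun s => key s ≤ key t) := by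
          intro u hu
          rcases Finset.mem_insert.1 hu with rfl | hu
          · exact Finset.mem_filter.2 ⟨ht, le_refl _⟩
          · have huA : u ∈ A := (hAmem u).2 (hSsub u hu)
            have hgu : g u = 0 := (hg0 u).2 hu
            refine Finset.mem_filter.2 ⟨huA, ?_⟩
            have hgt : g t ≠ 0 := fun hh => hts ((hg0 t).1 hh)
            have hgt1 : 1 ≤ g t := by omega
            have hmul : 2*n+2 ≤ g t * (2*n+2) := Nat.le_mul_of_pos_left _ (by omega)
            have hu2 := (hAmem u).1 huA
            simp only [hkeydef, hgu]
            omega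
        have hcard : k + 1 ≤ r t := by
          have h1 : (insert t S).card = k + 1 := by
            rw [Finset.card_insert_of_notMem hts, hScard]
          calc k + 1 = (insert t S).card := h1.symm
            _ ≤ (A.filter (fun s => key s ≤ key t)).card := Finset.card_le_card hsub
            _ = r t := rfl
        omega
      · intro hts
        have hsub : A.filter (fun s => key s ≤ key t) ⊆ S := by
          intro u hu
          obtain ⟨huA, hle'⟩ := Finset.mem_filter.1 hu
          by_contra hus
          have hgt : g t = 0 := (hg0 t).2 hts
          have hgu : g u ≠ 0 := fun hh => hus ((hg0 u).1 hh)
          have hmul : 2*n+2 ≤ g u * (2*n+2) := Nat.le_mul_of_pos_left _ (by omega)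
          have ht2 := (hAmem t).1 ht
          simp only [hkeydef, hgt] at hle'
          omega
        calc r t ≤ S.card := Finset.card_le_card hsub
          _ = k := hScard
    -- the rank function mirrors
    have hMA : ∀ t ∈ A, (2*n+2-t) ∈ A := by
      intro t ht
      rw [hAmem] at ht ⊢; omega
    have hMM : ∀ t ∈ A, 2*n+2-(2*n+2-t) = t := by
      intro t ht; rw [hAmem] at ht; omega
    have hrmirror : ∀ t ∈ A, r (2*n+2-t) = 2*n+2 - r t := by
      intro t ht
      have h1 : (A.filter (fun s => key s ≤ key (2*n+2-t))).card
          = (A.filter (fun u => key t ≤ key u)).card := by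
        refine Finset.card_bij' (fun s _ => 2*n+2-s) (fun u _ => 2*n+2-u) ?_ ?_ ?_ ?_
        · intro s hs
          obtain ⟨hsA, hle'⟩ := Finset.mem_filter.1 hs
          refine Finset.mem_filter.2 ⟨hMA s hsA, ?_⟩
          exact (hkeysym s hsA t ht).1 hle'
        · intro u hu
          obtain ⟨huA, hle'⟩ := Finset.mem_filter.1 hu
          refine Finset.mem_filter.2 ⟨hMA u huA, ?_⟩
          have := (hkeysym (2*n+2-u) (hMA u huA) t ht).2
          rw [hMM u huA] at this
          exact this hle'
        · intro s hs
          exact hMM s (Finset.mem_filter.1 hs).1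
        · intro u hu
          exact hMM u (Finset.mem_filter.1 hu).1
      have h2 : (A.filter (fun u => key t ≤ key u)).card
          + (A.filter (fun u => key u < key t)).card = 2*n+1 := by
        have := Finset.card_filter_add_card_filter_not
          (s := A) (p := fun u => key t ≤ key u)
        rw [hAcard] at this
        have heq : A.filter (fun u => ¬ key t ≤ key u) = A.filter (fun u => key u < key t) := by
          apply Finset.filter_congr
          intro u _
          omega
        rw [heq] at this
        exact this
      have h3 : r t = (A.filter (fun u => key u < key t)).card + 1 := by
        have heq : A.filter (fun s => key s ≤ key t)
            = insert t (A.filter (fun u => key u < key t)) := by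
          ext u
          simp only [Finset.mem_filter, Finset.mem_insert]
          constructor
          · rintro ⟨huA, hle'⟩
            rcases eq_or_lt_of_le hle' with heq' | hlt
            · exact Or.inl (hkeyinj u huA t ht heq')
            · exact Or.inr ⟨huA, hlt⟩
          · rintro (rfl | ⟨huA, hlt⟩)
            · exact ⟨ht, le_refl _⟩
            · exact ⟨huA, hlt.le⟩
        rw [hrdef]
        simp only
        rw [heq, Finset.card_insert_of_notMem]
        simp only [Finset.mem_filter]
        rintro ⟨-, hlt⟩
        omega
      have h4 : r (2*n+2-t) = (A.filter (fun s => key s ≤ key (2*n+2-t))).card := rfl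
      have h5 := hr1 t ht
      have h6 := hr2 t
      omega
    -- the permutation
    set f : ℕ → ℕ := fun t => if 1 ≤ t ∧ t ≤ 2*n+1 then r t else t with hfdef
    have hfA : ∀ t ∈ A, f t = r t := by
      intro t ht
      rw [hAmem] at ht
      simp only [hfdef, if_pos ht]
    have hfinj : Function.Injective f := by
      intro s t h
      by_cases hs : 1 ≤ s ∧ s ≤ 2*n+1 <;> by_cases ht' : 1 ≤ t ∧ t ≤ 2*n+1
      · refine hrinj s ((hAmem s).2 hs) t ((hAmem t).2 ht') ?_
        simpa [hfdef, if_pos hs, if_pos ht'] using h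
      · exfalso
        have h1 : f s = r s := by simp [hfdef, if_pos hs]
        have h2 : f t = t := by simp [hfdef, ht']
        have := hr1 s ((hAmem s).2 hs)
        have := hr2 s
        omega
      · exfalso
        have h1 : f t = r t := by simp [hfdef, if_pos ht']
        have h2 : f s = s := by simp [hfdef, hs]
        have := hr1 t ((hAmem t).2 ht')
        have := hr2 t
        omega
      · simpa [hfdef, hs, ht'] using h
    have hfsurj : Function.Surjective f := by
      intro y
      by_cases hy : 1 ≤ y ∧ y ≤ 2*n+1
      · have himg : A.image f = A := by
          apply Finset.eq_of_subset_of_card_le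
          · intro u hu
            obtain ⟨t, ht, rfl⟩ := Finset.mem_image.1 hu
            rw [hfA t ht]
            exact (hAmem _).2 ⟨hr1 t ht, hr2 t⟩
          · rw [Finset.card_image_of_injOn (fun x _ y _ h => hfinj h)]
        have hyA : y ∈ A.image f := himg.symm ▸ (hAmem y).2 hy
        obtain ⟨t, _, hht⟩ := Finset.mem_image.1 hyA
        exact ⟨t, hht⟩
      · exact ⟨y, by simp [hfdef, hy]⟩
    refine ⟨Equiv.ofBijective f ⟨hfinj, hfsurj⟩, k, hk1, hkn, ?_, ?_, ?_⟩
    · intro t ht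
      show f t = t
      simp [hfdef, ht]
    · intro t h1 h2
      show f (2*n+2-t) = 2*n+2 - f t
      have hMt : 1 ≤ 2*n+2-t ∧ 2*n+2-t ≤ 2*n+1 := by omega
      rw [hfdef]
      simp only [if_pos hMt, if_pos (And.intro h1 h2)]
      exact hrmirror t ((hAmem t).2 ⟨h1, h2⟩)
    · intro j hj
      have hbj := hbN j hj
      have hbsj := hblock_sub j hj
      have hfilter : (Finset.Icc (blockStart N j + 1) (blockStart N j + N j)).filter
          (fun t => (Equiv.ofBijective f ⟨hfinj, hfsurj⟩) t ≤ k)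
          = Finset.Icc (blockStart N j + 1) (blockStart N j + b j) := by
        ext t
        simp only [Finset.mem_filter, Finset.mem_Icc, Equiv.ofBijective_apply]
        constructor
        · rintro ⟨⟨h1, h2⟩, h3⟩
          have htA : t ∈ A := (hAmem t).2 ⟨by omega, by omega⟩
          change f t ≤ k at h3; rw [hfA t htA] at h3
          have htS := (hrk t htA).1 h3
          obtain ⟨j', hj', h4, h5⟩ := (hSmem t).1 htS
          have hbj' := hbN j' hj'
          have heq : j' = j := block_unique j' hj' j hj t (by omega) (by omega) (by omega) h2
          subst heq
          exact ⟨h4, h5⟩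
        · rintro ⟨h1, h2⟩
          have htA : t ∈ A := (hAmem t).2 ⟨by omega, by omega⟩
          refine ⟨⟨h1, by omega⟩, ?_⟩
          show f t ≤ k; rw [hfA t htA]
          exact (hrk t htA).2 ((hSmem t).2 ⟨j, hj, h1, h2⟩)
      rw [hfilter, Nat.card_Icc]
      have h1 := hba j hj
      have h2 : blockStart N j + b j + 1 - (blockStart N j + 1) = b j := by omega
      rw [h2]
      exact h1.symm
end

section
/- Let N^A_0, ..., N^A_{2m} be nonnegative integers symmetric about m (N^A_j = N^A_{2m-j}) such that N^A_j ≥ N^A_{j-1} for all 1 ≤ j ≤ m and N^A_s ≥ N^A_{s-1} + 2 for some s ≤ m; take s maximal. Define a_j = 1 for s ≤ j ≤ 2m-s and a_j = 0 otherwise, u_j = (a_j, N^A_j - a_j) with u_{-1} = u_{2m+1} = (0,0). Then -(1/2)·Σ_{j=0}^{2m+1} (u_j - u_{j-1})^T M (u_j - u_{j-1}) + 2a_m ≤ 0, where M = [[0,1],[1,0]]. -/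
/-- Extended vectors `u_j = (a_j, N_j - a_j)` for `0 ≤ j ≤ M`, with
`u_{-1} = u_{M+1} = (0,0)`; here `uextB M a N k` is `u_{k-1}`. -/
def uextB (M : ℕ) (a N : ℕ → ℤ) (k : ℕ) : ℤ × ℤ :=
  if 1 ≤ k ∧ k ≤ M + 1 then (a (k - 1), N (k - 1) - a (k - 1)) else (0, 0)

/-- The quadratic form `uᵀ [[0,1],[1,0]] u = 2·u₁·u₂`. -/
def Qform (p : ℤ × ℤ) : ℤ := 2 * p.1 * p.2

/-- `N_{j-1}`, with the convention `N_{-1} = 0`. -/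
def Nprev (N : ℕ → ℤ) (j : ℕ) : ℤ := if j = 0 then 0 else N (j - 1)

/-- The choice `a_j = 1` for `s ≤ j ≤ 2m-s`, `a_j = 0` otherwise. -/
def aJump (m s : ℕ) : ℕ → ℤ := fun j => if s ≤ j ∧ j ≤ 2 * m - s then 1 else 0

/-- B-type non-positivity, jump case: with `N^A_0,…,N^A_{2m}`
nonnegative, symmetric about `m`, weakly increasing up to `m` (with
`N^A_{-1} = 0`), and `s ≤ m` maximal with `N^A_s ≥ N^A_{s-1} + 2`; setting
`a_j = 1` for `s ≤ j ≤ 2m-s` and `0` otherwise, `u_j = (a_j, N^A_j - a_j)`,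
`u_{-1} = u_{2m+1} = (0,0)`:
`-(1/2)·Σ_{j=0}^{2m+1} (u_j-u_{j-1})ᵀ M (u_j-u_{j-1}) + 2a_m ≤ 0`. -/
theorem stmt_13 (m : ℕ) (N : ℕ → ℤ)
    (hNnn : ∀ j ≤ 2 * m, 0 ≤ N j)
    (hsym : ∀ j ≤ 2 * m, N j = N (2 * m - j))
    (hmono : ∀ j ≤ m, Nprev N j ≤ N j)
    (s : ℕ) (hsm : s ≤ m)
    (hjump : Nprev N s + 2 ≤ N s)
    (hmax : ∀ t ≤ m, Nprev N t + 2 ≤ N t → t ≤ s) :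
    -(1 / 2 : ℚ) * ∑ j ∈ Finset.range (2 * m + 2),
        ((Qform (uextB (2 * m) (aJump m s) N (j + 1) - uextB (2 * m) (aJump m s) N j) : ℤ) : ℚ)
      + 2 * ((aJump m s m : ℤ) : ℚ) ≤ 0 := by
  have hsm2 : s ≤ 2 * m := by omega
  set t := 2 * m - s + 1 with ht
  -- off-support terms vanish
  have key : ∀ j ∈ Finset.range (2 * m + 2), j ≠ s ∧ j ≠ t →
      Qform (uextB (2 * m) (aJump m s) N (j + 1) - uextB (2 * m) (aJump m s) N j) = 0 := by
    intro j hj ⟨h1, h2⟩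
    have hj' : j < 2 * m + 2 := Finset.mem_range.mp hj
    have hfst : (uextB (2 * m) (aJump m s) N (j + 1) - uextB (2 * m) (aJump m s) N j).1 = 0 := by
      simp only [uextB, aJump, Nat.add_sub_cancel, Prod.fst_sub, apply_ite (Prod.fst (α := ℤ) (β := ℤ))]
      split_ifs <;> omega
    simp [Qform, hfst]
  have hNs : N (2 * m - s) = N s := (hsym s hsm2).symm
  -- the term at s
  have hfs : Qform (uextB (2 * m) (aJump m s) N (s + 1) - uextB (2 * m) (aJump m s) N s)
      = 2 * (N s - 1 - Nprev N s) := by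
    have h1 : uextB (2 * m) (aJump m s) N (s + 1) = (1, N s - 1) := by
      simp only [uextB, aJump, Nat.add_sub_cancel]
      rw [if_pos (by omega), if_pos (by omega)]
    have h2 : uextB (2 * m) (aJump m s) N s = (0, Nprev N s) := by
      rcases Nat.eq_zero_or_pos s with hs | hs
      · subst hs; simp [uextB, Nprev]
      · simp only [uextB, aJump, Nprev]
        rw [if_pos (by omega), if_neg (by omega), if_neg (by omega)]
        simp
    rw [h1, h2]
    simp only [Qform, Prod.mk_sub_mk, Prod.fst, Prod.snd]
    ring
  -- the term at t
  have hft : Qform (uextB (2 * m) (aJump m s) N (t + 1) - uextB (2 * m) (aJump m s) N t)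
      = 2 * (N s - 1 - Nprev N s) := by
    have h2 : uextB (2 * m) (aJump m s) N t = (1, N s - 1) := by
      simp only [uextB, aJump, ht, Nat.add_sub_cancel]
      rw [if_pos (by omega), if_pos (by omega), hNs]
    have h1 : uextB (2 * m) (aJump m s) N (t + 1) = (0, Nprev N s) := by
      rcases Nat.eq_zero_or_pos s with hs | hs
      · subst hs
        simp only [uextB, Nprev, ht]
        rw [if_neg (by omega)]
        simp
      · have hsymt : N (2 * m - s + 1) = N (s - 1) := by
          have := hsym (2 * m - s + 1) (by omega)
          rwa [show 2 * m - (2 * m - s + 1) = s - 1 by omega] at this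
        simp only [uextB, aJump, Nprev, ht, Nat.add_sub_cancel]
        rw [if_pos (by omega), if_neg (by omega), if_neg (by omega), hsymt]
        simp
    rw [h1, h2]
    simp only [Qform, Prod.mk_sub_mk, Prod.fst, Prod.snd]
    ring
  have hne : s ≠ t := by omega
  have hsum : ∑ j ∈ Finset.range (2 * m + 2),
      Qform (uextB (2 * m) (aJump m s) N (j + 1) - uextB (2 * m) (aJump m s) N j)
      = 4 * (N s - 1 - Nprev N s) := by
    rw [Finset.sum_eq_add_of_mem s t (by simp; omega) (by simp; omega) hne key, hfs, hft]
    ring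
  have ham : aJump m s m = 1 := by simp only [aJump]; rw [if_pos (by omega)]
  rw [← Int.cast_sum, hsum, ham]
  have h2 : (Nprev N s : ℚ) + 2 ≤ (N s : ℚ) := by exact_mod_cast hjump
  push_cast
  linarith
end

section
/- Let N^A_0, ..., N^A_{2m} be nonnegative integers with N^A_0 = 1, N^A_{j-1} ≤ N^A_j ≤ N^A_{j-1} + 1 for 1 ≤ j ≤ m, and N^A_j = N^A_{2m-j} for all j (symmetric, with N^A_m odd). Then for every choice of integers a_0, ..., a_{2m} with 0 ≤ a_j ≤ N^A_j, a_j + a_{2m-j} ≤ N^A_j for all j, and some a_j > 0, the quantity -(1/2)·Σ_{j=0}^{2m+1} (u_j - u_{j-1})^T M (u_j - u_{j-1}) + 2a_m is strictly positive, where u_j = (a_j, N^A_j - a_j), u_{-1} = u_{2m+1} = (0,0), M = [[0,1],[1,0]]. -/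
lemma int_mul_pred_nonneg (x : ℤ) : 0 ≤ x * (x - 1) := by
  rcases le_or_gt x 0 with h | h
  · nlinarith
  · exact mul_nonneg (by linarith) (by omega)

lemma qle (x y s : ℤ) (h1 : -1 ≤ s) (h2 : s ≤ 1) (hxy : x + y = s) : 2 * x * y ≤ 0 := by
  interval_cases s <;>
    nlinarith [int_mul_pred_nonneg x, int_mul_pred_nonneg (x + 1), mul_self_nonneg x]

lemma qneg1 (x y s : ℤ) (hx : x ≤ -1) (hs : 0 ≤ s) (hxy : x + y = s) : 2 * x * y < 0 := by
  have hy : 1 ≤ y := by omega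
  nlinarith

lemma qneg2 (x y s : ℤ) (hx : 1 ≤ x) (hs : s ≤ 0) (hxy : x + y = s) : 2 * x * y < 0 := by
  have hy : y ≤ -1 := by omega
  nlinarith

lemma chain_le (a : ℕ → ℤ) :
    ∀ hi lo : ℕ, lo ≤ hi → (∀ k, lo < k → k ≤ hi → a (k - 1) ≤ a k) → a lo ≤ a hi := by
  intro hi
  induction hi with
  | zero =>
    intro lo h _
    interval_cases lo
    exact le_rfl
  | succ n ih =>
    intro lo h hk
    rcases Nat.lt_or_ge lo (n + 1) with h' | h'
    · have h1 : a lo ≤ a n := ih lo (by omega) (fun k hk1 hk2 => hk k hk1 (by omega))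
      have h2 := hk (n + 1) (by omega) le_rfl
      simp only [Nat.add_sub_cancel] at h2
      linarith
    · have : lo = n + 1 := by omega
      subst this
      exact le_rfl

lemma chain_ge (a : ℕ → ℤ) (hi lo : ℕ) (h : lo ≤ hi)
    (hk : ∀ k, lo < k → k ≤ hi → a k ≤ a (k - 1)) : a hi ≤ a lo := by
  have := chain_le (fun n => -(a n)) hi lo h (fun k h1 h2 => by simpa using hk k h1 h2)
  simpa using this

/-- B-type positivity for distinguished weightings: with
`N^A_0 = 1`, `N^A_{j-1} ≤ N^A_j ≤ N^A_{j-1} + 1` for `1 ≤ j ≤ m`, symmetric about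
`m` with `N^A_m` odd, and `0 ≤ a_j ≤ N^A_j`, `a_j + a_{2m-j} ≤ N^A_j` for all
`j ≤ 2m`, with some `a_j > 0`:
`-(1/2)·Σ_{j=0}^{2m+1} (u_j-u_{j-1})ᵀ M (u_j-u_{j-1}) + 2a_m > 0`, where
`u_j = (a_j, N^A_j - a_j)` and `u_{-1} = u_{2m+1} = (0,0)`. -/
theorem stmt_14 (m : ℕ) (N : ℕ → ℤ) (hN0 : N 0 = 1)
    (hstep : ∀ j : ℕ, 1 ≤ j → j ≤ m → N (j - 1) ≤ N j ∧ N j ≤ N (j - 1) + 1)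
    (hsym : ∀ j ≤ 2 * m, N j = N (2 * m - j))
    (hodd : Odd (N m))
    (a : ℕ → ℤ) (ha : ∀ j ≤ 2 * m, 0 ≤ a j ∧ a j ≤ N j)
    (hpair : ∀ j ≤ 2 * m, a j + a (2 * m - j) ≤ N j)
    (hex : ∃ j ≤ 2 * m, 0 < a j) :
    0 < -(1 / 2 : ℚ) * ∑ j ∈ Finset.range (2 * m + 2),
        ((Qform (uextB (2 * m) a N (j + 1) - uextB (2 * m) a N j) : ℤ) : ℚ)
      + 2 * ((a m : ℤ) : ℚ) := by
  have hN2m : N (2 * m) = 1 := by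
    have h := hsym 0 (by omega)
    simp at h
    omega
  -- step bounds for N
  have hNs : ∀ j, 1 ≤ j → j ≤ 2 * m →
      (-1 ≤ N j - N (j - 1) ∧ N j - N (j - 1) ≤ 1) ∧
      (j ≤ m → 0 ≤ N j - N (j - 1)) ∧ (m + 1 ≤ j → N j - N (j - 1) ≤ 0) := by
    intro j h1 h2
    rcases le_or_gt j m with hjm | hjm
    · obtain ⟨hA, hB⟩ := hstep j h1 hjm
      exact ⟨⟨by linarith, by linarith⟩, fun _ => by linarith, fun h => by omega⟩
    · have hk1 : 1 ≤ 2 * m - j + 1 := by omega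
      have hk2 : 2 * m - j + 1 ≤ m := by omega
      obtain ⟨hA, hB⟩ := hstep (2 * m - j + 1) hk1 hk2
      have e1 : N j = N (2 * m - j + 1 - 1) := by
        simp only [Nat.add_sub_cancel]
        exact hsym j (by omega)
      have e2 : N (j - 1) = N (2 * m - j + 1) := by
        have h := hsym (j - 1) (by omega)
        rw [h]; congr 1; omega
      rw [e1, e2]
      exact ⟨⟨by linarith, by linarith⟩, fun h => by omega, fun _ => by linarith⟩
  -- values of the quadratic form terms
  have hF0 : Qform (uextB (2 * m) a N 1 - uextB (2 * m) a N 0) = 2 * a 0 * (N 0 - a 0) := by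
    simp only [uextB]
    rw [if_pos ⟨le_rfl, by omega⟩, if_neg (by omega)]
    simp [Qform, Prod.mk_sub_mk]
  have hFmid : ∀ j, 1 ≤ j → j ≤ 2 * m →
      Qform (uextB (2 * m) a N (j + 1) - uextB (2 * m) a N j)
        = 2 * (a j - a (j - 1)) * ((N j - a j) - (N (j - 1) - a (j - 1))) := by
    intro j h1 h2
    simp only [uextB]
    rw [if_pos ⟨by omega, by omega⟩, if_pos ⟨by omega, by omega⟩]
    simp only [Nat.add_sub_cancel]
    simp [Qform, Prod.mk_sub_mk]
  have hFlast : Qform (uextB (2 * m) a N (2 * m + 1 + 1) - uextB (2 * m) a N (2 * m + 1))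
      = 2 * (0 - a (2 * m)) * (0 - (N (2 * m) - a (2 * m))) := by
    simp only [uextB]
    rw [if_neg (by omega), if_pos ⟨by omega, by omega⟩]
    simp only [Nat.add_sub_cancel]
    simp [Qform, Prod.mk_sub_mk]
  -- every term is nonpositive
  have hle : ∀ j ∈ Finset.range (2 * m + 2),
      Qform (uextB (2 * m) a N (j + 1) - uextB (2 * m) a N j) ≤ 0 := by
    intro j hj
    simp only [Finset.mem_range] at hj
    rcases Nat.eq_zero_or_pos j with h0 | h1
    · subst h0
      rw [hF0]
      exact qle _ _ (N 0) (by omega) (by omega) (by ring)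
    · rcases Nat.lt_or_ge j (2 * m + 1) with h2 | h2
      · rw [hFmid j h1 (by omega)]
        obtain ⟨⟨hA, hB⟩, -, -⟩ := hNs j h1 (by omega)
        exact qle _ _ (N j - N (j - 1)) hA hB (by ring)
      · have hj' : j = 2 * m + 1 := by omega
        subst hj'
        rw [hFlast]
        exact qle _ _ (-(N (2 * m))) (by omega) (by omega) (by ring)
  -- the key integer inequality
  have hmnn : 0 ≤ a m := (ha m (by omega)).1
  have H : 0 < -(∑ j ∈ Finset.range (2 * m + 2),
      Qform (uextB (2 * m) a N (j + 1) - uextB (2 * m) a N j)) + 4 * a m := by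
    rcases lt_or_eq_of_le hmnn with ham | ham
    · have hsle : ∑ j ∈ Finset.range (2 * m + 2),
          Qform (uextB (2 * m) a N (j + 1) - uextB (2 * m) a N j) ≤ 0 :=
        Finset.sum_nonpos hle
      linarith
    · obtain ⟨j0, hj0, haj0⟩ := hex
      have hne : j0 ≠ m := by
        intro h
        rw [h] at haj0
        omega
      have hstrict : ∃ k ∈ Finset.range (2 * m + 2),
          Qform (uextB (2 * m) a N (k + 1) - uextB (2 * m) a N k) < 0 := by
        rcases Nat.lt_or_ge j0 m with hlt | hge
        · by_cases hmono : ∀ k, j0 < k → k ≤ m → a (k - 1) ≤ a k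
          · exfalso
            have := chain_le a m j0 (le_of_lt hlt) hmono
            omega
          · push_neg at hmono
            obtain ⟨k, hk1, hk2, hk3⟩ := hmono
            refine ⟨k, Finset.mem_range.mpr (by omega), ?_⟩
            rw [hFmid k (by omega) (by omega)]
            obtain ⟨-, hpos, -⟩ := hNs k (by omega) (by omega)
            exact qneg1 _ _ (N k - N (k - 1)) (by omega) (hpos hk2) (by ring)
        · have hgt : m < j0 := by omega
          by_cases hmono : ∀ k, m < k → k ≤ j0 → a k ≤ a (k - 1)
          · exfalso
            have := chain_ge a j0 m (le_of_lt hgt) hmono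
            omega
          · push_neg at hmono
            obtain ⟨k, hk1, hk2, hk3⟩ := hmono
            refine ⟨k, Finset.mem_range.mpr (by omega), ?_⟩
            rw [hFmid k (by omega) (by omega)]
            obtain ⟨-, -, hneg⟩ := hNs k (by omega) (by omega)
            exact qneg2 _ _ (N k - N (k - 1)) (by omega) (hneg (by omega)) (by ring)
      have hslt : ∑ j ∈ Finset.range (2 * m + 2),
          Qform (uextB (2 * m) a N (j + 1) - uextB (2 * m) a N j) < 0 := by
        have := Finset.sum_lt_sum (g := fun _ => (0 : ℤ)) hle hstrict
        simpa using this
      linarith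
  -- pass to ℚ
  have hc : ∑ j ∈ Finset.range (2 * m + 2),
      ((Qform (uextB (2 * m) a N (j + 1) - uextB (2 * m) a N j) : ℤ) : ℚ)
      = ((∑ j ∈ Finset.range (2 * m + 2),
          Qform (uextB (2 * m) a N (j + 1) - uextB (2 * m) a N j) : ℤ) : ℚ) := by
    push_cast
    rfl
  rw [hc]
  have HQ : (0 : ℚ) < -((∑ j ∈ Finset.range (2 * m + 2),
      Qform (uextB (2 * m) a N (j + 1) - uextB (2 * m) a N j) : ℤ) : ℚ)
      + 4 * ((a m : ℤ) : ℚ) := by exact_mod_cast H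
  linarith
end

section
/- Define f: ℤ^7 → ℤ^3 by f(e_1) = e_1 - e_3, f(e_2) = e_2 - e_3, f(e_3) = e_1 - e_2, f(e_4) = 0, f(e_5) = -(e_1 - e_2), f(e_6) = -(e_2 - e_3), f(e_7) = -(e_1 - e_3). Let α = e_1 - e_2 and β = -e_1 + 2e_2 - e_3 be simple roots of G_2 with positive roots α, β, β+α, β+2α, β+3α, 2β+3α. Then f maps the simple roots e_i - e_{i+1} of A_6 to simple roots of G_2 (to α for i ∈ {1,3,4,6} and to β for i ∈ {2,5}), and f is positive and root surjective: every positive root of G_2 has at least one root preimage in A_6, and all its root preimages are positive roots of A_6. -/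
/-- The `i`-th standard basis vector `e_i` (1-indexed coordinates in `ℕ → ℤ`). -/
def eb (i : ℕ) : ℕ → ℤ := fun j => if j = i then 1 else 0

/-- Roots of `A_{N-1}` living in coordinates `1,…,N`: the vectors `e_a - e_b`, `a ≠ b`. -/
def isArootOf (N : ℕ) (r : ℕ → ℤ) : Prop :=
  ∃ a b : ℕ, 1 ≤ a ∧ a ≤ N ∧ 1 ≤ b ∧ b ≤ N ∧ a ≠ b ∧ r = eb a - eb b

/-- Positive roots of `A_{N-1}`: `e_a - e_b` with `a < b`. -/
def isArootPosOf (N : ℕ) (r : ℕ → ℤ) : Prop :=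
  ∃ a b : ℕ, 1 ≤ a ∧ a < b ∧ b ≤ N ∧ r = eb a - eb b

/-- The map `f : ℤ^7 → ℤ^3` determined by `f(e_1) = e_1 - e_3`, `f(e_2) = e_2 - e_3`,
`f(e_3) = e_1 - e_2`, `f(e_4) = 0`, `f(e_5) = -(e_1 - e_2)`, `f(e_6) = -(e_2 - e_3)`,
`f(e_7) = -(e_1 - e_3)`. -/
def fG (v : ℕ → ℤ) : ℕ → ℤ := fun j =>
  if j = 1 then v 1 + v 3 - v 5 - v 7
  else if j = 2 then v 2 - v 3 + v 5 - v 6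
  else if j = 3 then -v 1 - v 2 + v 6 + v 7
  else 0

/-- The simple root `α = e_1 - e_2` of `G_2`. -/
def alphaG : ℕ → ℤ := eb 1 - eb 2

/-- The simple root `β = -e_1 + 2e_2 - e_3` of `G_2`. -/
def betaG : ℕ → ℤ := fun j => if j = 1 then -1 else if j = 2 then 2 else if j = 3 then -1 else 0

/-- Positive roots of `G_2`: `α, β, β+α, β+2α, β+3α, 2β+3α`. -/
def isG2pos (s : ℕ → ℤ) : Prop :=
  s = alphaG ∨ s = betaG ∨ s = betaG + alphaG ∨ s = betaG + 2 • alphaG ∨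
    s = betaG + 3 • alphaG ∨ s = 2 • betaG + 3 • alphaG

/-- Two integer vectors agreeing at `0,1,2,3` and on `[4,∞)` are equal. -/
lemma ext_aux {u v : ℕ → ℤ} (h0 : u 0 = v 0) (h1 : u 1 = v 1) (h2 : u 2 = v 2)
    (h3 : u 3 = v 3) (h : ∀ j, 4 ≤ j → u j = v j) : u = v := by
  funext j
  match j with
  | 0 => exact h0
  | 1 => exact h1
  | 2 => exact h2
  | 3 => exact h3
  | (n+4) => exact h (n+4) (by omega)

lemma fG_tail (v : ℕ → ℤ) (j : ℕ) (h : j = 0 ∨ 4 ≤ j) : fG v j = 0 := by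
  simp [fG, show j ≠ 1 by omega, show j ≠ 2 by omega, show j ≠ 3 by omega]

lemma alphaG_tail (j : ℕ) (h : j = 0 ∨ 4 ≤ j) : alphaG j = 0 := by
  simp [alphaG, eb, show j ≠ 1 by omega, show j ≠ 2 by omega]

lemma betaG_tail (j : ℕ) (h : j = 0 ∨ 4 ≤ j) : betaG j = 0 := by
  simp [betaG, show j ≠ 1 by omega, show j ≠ 2 by omega, show j ≠ 3 by omega]

/-- All root preimages of a positive `G_2` root are positive roots of `A_6`. -/
lemma key_pos : ∀ s : ℕ → ℤ, isG2pos s →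
    ∀ r, isArootOf 7 r → fG r = s → isArootPosOf 7 r := by
  rintro s hs r ⟨a, b, ha1, ha7, hb1, hb7, hab, rfl⟩ hf
  rcases hs with rfl | rfl | rfl | rfl | rfl | rfl <;>
    interval_cases a <;> interval_cases b <;>
      first
        | exact absurd rfl hab
        | (refine ⟨_, _, ?_, ?_, ?_, rfl⟩ <;> decide)
        | exact absurd (congrFun hf 1) (by decide)
        | exact absurd (congrFun hf 2) (by decide)
        | exact absurd (congrFun hf 3) (by decide)

/-- `f` maps the simple roots `e_i - e_{i+1}` of `A_6` to simple roots
of `G_2` (to `α` for `i ∈ {1,3,4,6}` and to `β` for `i ∈ {2,5}`), and `f` is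
positive and root surjective: every positive root of `G_2` has at least one root
preimage in `A_6`, and all of its root preimages are positive roots of `A_6`. -/
theorem stmt_17 :
    (∀ i ∈ ({1, 3, 4, 6} : Set ℕ), fG (eb i - eb (i + 1)) = alphaG) ∧
    (∀ i ∈ ({2, 5} : Set ℕ), fG (eb i - eb (i + 1)) = betaG) ∧
    (∀ s : ℕ → ℤ, isG2pos s →
      (∃ r : ℕ → ℤ, isArootOf 7 r ∧ fG r = s) ∧
      (∀ r : ℕ → ℤ, isArootOf 7 r → fG r = s → isArootPosOf 7 r)) := by
  refine ⟨?_, ?_, fun s hs => ⟨?_, key_pos s hs⟩⟩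
  · intro i hi
    simp only [Set.mem_insert_iff, Set.mem_singleton_iff] at hi
    rcases hi with rfl | rfl | rfl | rfl <;>
      exact ext_aux (by decide) (by decide) (by decide) (by decide)
        (fun j hj => by rw [fG_tail _ j (Or.inr hj), alphaG_tail j (Or.inr hj)])
  · intro i hi
    simp only [Set.mem_insert_iff, Set.mem_singleton_iff] at hi
    rcases hi with rfl | rfl <;>
      exact ext_aux (by decide) (by decide) (by decide) (by decide)
        (fun j hj => by rw [fG_tail _ j (Or.inr hj), betaG_tail j (Or.inr hj)])
  · rcases hs with rfl | rfl | rfl | rfl | rfl | rfl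
    · exact ⟨eb 4 - eb 5, ⟨4, 5, by decide, by decide, by decide, by decide, by decide, rfl⟩,
        ext_aux (by decide) (by decide) (by decide) (by decide)
          (fun j hj => by rw [fG_tail _ j (Or.inr hj), alphaG_tail j (Or.inr hj)])⟩
    · exact ⟨eb 2 - eb 3, ⟨2, 3, by decide, by decide, by decide, by decide, by decide, rfl⟩,
        ext_aux (by decide) (by decide) (by decide) (by decide)
          (fun j hj => by rw [fG_tail _ j (Or.inr hj), betaG_tail j (Or.inr hj)])⟩
    · exact ⟨eb 2 - eb 4, ⟨2, 4, by decide, by decide, by decide, by decide, by decide, rfl⟩,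
        ext_aux (by decide) (by decide) (by decide) (by decide)
          (fun j hj => by simp [fG_tail _ j (Or.inr hj), Pi.add_apply,
            alphaG_tail j (Or.inr hj), betaG_tail j (Or.inr hj)])⟩
    · exact ⟨eb 1 - eb 4, ⟨1, 4, by decide, by decide, by decide, by decide, by decide, rfl⟩,
        ext_aux (by decide) (by decide) (by decide) (by decide)
          (fun j hj => by simp [fG_tail _ j (Or.inr hj), Pi.add_apply, Pi.smul_apply,
            alphaG_tail j (Or.inr hj), betaG_tail j (Or.inr hj)])⟩
    · exact ⟨eb 1 - eb 5, ⟨1, 5, by decide, by decide, by decide, by decide, by decide, rfl⟩,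
        ext_aux (by decide) (by decide) (by decide) (by decide)
          (fun j hj => by simp [fG_tail _ j (Or.inr hj), Pi.add_apply, Pi.smul_apply,
            alphaG_tail j (Or.inr hj), betaG_tail j (Or.inr hj)])⟩
    · exact ⟨eb 1 - eb 6, ⟨1, 6, by decide, by decide, by decide, by decide, by decide, rfl⟩,
        ext_aux (by decide) (by decide) (by decide) (by decide)
          (fun j hj => by simp [fG_tail _ j (Or.inr hj), Pi.add_apply, Pi.smul_apply,
            alphaG_tail j (Or.inr hj), betaG_tail j (Or.inr hj)])⟩
end
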